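/- Let ρ₁ and ρ₂ satisfy (A3) with associated functions g₁ and g₂, let 0 < ε < b < 1, and define σ_{b,ε} = g₁⁻¹((b−ε)/(1−ε)) and γ_{b,ε} = g₁⁻¹(b/(1−ε)). Suppose g₂ satisfies (A4) and that g₂(γ_{b,ε}) + ε/(1−ε) < 1, and set ℓ(ε) = [ (σ_{b,ε}/g₂⁻¹(g₂(σ_{b,ε}) + ε/(1−ε)))² − 1 ]^{1/2} and u(ε) = [ (γ_{b,ε}/g₂⁻¹(g₂(γ_{b,ε}) + ε/(1−ε)))² − 1 ]^{1/2}. Then for every H ∈ V_ε under the Gaussian model, every s ∈ [γ_{b,ε}, σ_{b,ε}], and every (α, θ) minimizing (α', θ') ↦ ∫ ρ₂((y − α' − x'θ')/s) dH(y,x) over ℝ × ℝ^p, one has ‖θ‖ ≤ max{ℓ(ε), u(ε)}. -/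

import Mathlib

open MeasureTheory ProbabilityTheory Filter Set

open scoped NNReal ENNReal
open Real


lemma gaussKey (w : ℝ≥0) (hw : w ≠ 0) (c : ℝ) (hc : c ≠ 0) (z : ℝ) :
    ∫ a : ℝ, gaussianPDFReal 0 1 a * gaussianPDFReal 0 w (z - c * a)
      = gaussianPDFReal 0 (w + ⟨c^2, sq_nonneg c⟩) z := by
  have hW : (0:ℝ) < (w:ℝ) := by
    have := w.coe_nonneg
    rcases this.lt_or_eq with h | h
    · exact h
    · exact absurd (by exact_mod_cast h.symm) hw
  set W : ℝ := (w:ℝ) with hWdef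
  have hc2 : (0:ℝ) < c^2 := by positivity
  have hWc : (0:ℝ) < W + c^2 := by positivity
  set A : ℝ := (W + c^2) / (2*W) with hAdef
  have hA : 0 < A := by positivity
  set B : ℝ := c*z/(W + c^2) with hBdef
  have key : ∀ a : ℝ, gaussianPDFReal 0 1 a * gaussianPDFReal 0 w (z - c*a)
      = ((Real.sqrt (2*π*1))⁻¹ * (Real.sqrt (2*π*W))⁻¹ * Real.exp (-(z^2)/(2*(W+c^2))))
          * Real.exp (-(A*(a - B)^2)) := by
    intro a
    simp only [gaussianPDFReal]
    push_cast
    rw [show ((Real.sqrt (2*π*1))⁻¹ * rexp (-(a-0)^2/(2*1))) * ((Real.sqrt (2*π*W))⁻¹ * rexp (-(z - c*a - 0)^2/(2*W)))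
      = (Real.sqrt (2*π*1))⁻¹ * (Real.sqrt (2*π*W))⁻¹ * (rexp (-(a-0)^2/(2*1)) * rexp (-(z - c*a - 0)^2/(2*W))) from by ring]
    rw [← Real.exp_add]
    rw [show -(a-0)^2/(2*(1:ℝ)) + (-(z - c*a - 0)^2/(2*W)) = -(z^2)/(2*(W+c^2)) + (-(A*(a - B)^2)) from by
      rw [hAdef, hBdef]; field_simp; ring]
    rw [Real.exp_add]
    ring
  simp only [key]
  rw [integral_const_mul]
  have htr : ∫ a : ℝ, rexp (-(A*(a - B)^2)) = ∫ a : ℝ, rexp (-A * a^2) := by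
    rw [← integral_sub_right_eq_self (fun a => rexp (-A * a^2)) B]
    congr 1 with a
    ring_nf
  rw [htr, integral_gaussian]
  simp only [gaussianPDFReal]
  have hcoe : ((w + ⟨c^2, sq_nonneg c⟩ : ℝ≥0) : ℝ) = W + c^2 := by
    push_cast; rfl
  rw [hcoe]
  rw [show ((Real.sqrt (2*π*1))⁻¹ * (Real.sqrt (2*π*W))⁻¹ * rexp (-z ^ 2 / (2 * (W + c ^ 2)))) * Real.sqrt (π / A)
    = ((Real.sqrt (2*π*1))⁻¹ * (Real.sqrt (2*π*W))⁻¹ * Real.sqrt (π / A)) * rexp (-z ^ 2 / (2 * (W + c ^ 2))) from by ring]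
  have hconst : (Real.sqrt (2*π*1))⁻¹ * (Real.sqrt (2*π*W))⁻¹ * Real.sqrt (π / A)
      = (Real.sqrt (2*π*(W + c^2)))⁻¹ := by
    rw [← Real.sqrt_inv, ← Real.sqrt_inv, ← Real.sqrt_inv,
      ← Real.sqrt_mul (by positivity), ← Real.sqrt_mul (by positivity)]
    congr 1
    rw [hAdef]
    have hπ : (0:ℝ) < π := Real.pi_pos
    field_simp
  rw [hconst]
  congr 1
  rw [sub_zero]

lemma integral_gaussianReal_ne_zero (μ : ℝ) {v : ℝ≥0} (hv : v ≠ 0) (f : ℝ → ℝ) :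
    ∫ z, f z ∂(gaussianReal μ v) = ∫ z, gaussianPDFReal μ v z * f z := by
  rw [gaussianReal_of_var_ne_zero _ hv]
  rw [show gaussianPDF μ v = fun x => ((Real.toNNReal (gaussianPDFReal μ v x)) : ℝ≥0∞) from rfl]
  rw [integral_withDensity_eq_integral_smul ((measurable_gaussianPDFReal μ v).real_toNNReal) f]
  congr 1 with x
  rw [NNReal.smul_def, smul_eq_mul]
  congr 1
  exact Real.coe_toNNReal _ (gaussianPDFReal_nonneg _ _ _)

lemma bdd_integrable {X : Type*} [MeasurableSpace X] (μ : Measure X) [IsFiniteMeasure μ]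
    {f : X → ℝ} (hf : AEStronglyMeasurable f μ) (h1 : ∀ x, |f x| ≤ 1) : Integrable f μ :=
  (integrable_const (1:ℝ)).mono' hf (ae_of_all _ fun x => by simpa using h1 x)

lemma mixKey (c : ℝ) (w : ℝ≥0) (f : ℝ → ℝ) (hf : Measurable f)
    (h0 : ∀ x, 0 ≤ f x) (h1 : ∀ x, f x ≤ 1) :
    ∫ a, (∫ z, f z ∂(gaussianReal (c * a) w)) ∂(gaussianReal 0 1)
      = ∫ z, f z ∂(gaussianReal 0 (w + ⟨c^2, sq_nonneg c⟩)) := by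
  have habs : ∀ x, |f x| ≤ 1 := fun x => abs_le.2 ⟨by linarith [h0 x], h1 x⟩
  by_cases hc : c = 0
  · have : (w + ⟨c^2, sq_nonneg c⟩ : ℝ≥0) = w := by ext; show (w:ℝ) + c^2 = w; simp [hc]
    rw [this]
    simp only [hc, zero_mul]
    rw [integral_const]
    simp
  by_cases hw : w = 0
  · subst hw
    simp only [gaussianReal_zero_var, zero_add]
    have h1' : ∀ a : ℝ, ∫ z, f z ∂(Measure.dirac (c * a)) = f (c * a) := fun a =>
      integral_dirac f (c * a)
    simp only [h1']
    have : ∫ a, f (c*a) ∂(gaussianReal 0 1) = ∫ z, f z ∂((gaussianReal 0 1).map (fun b => c * b)) :=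
      (integral_map (measurable_const_mul c).aemeasurable hf.aestronglyMeasurable).symm
    rw [this, show (fun b : ℝ => c * b) = (c * ·) from rfl, gaussianReal_map_const_mul c]
    norm_num
    congr 2
    ext
    show c^2 = (0:ℝ) + c^2; ring
  -- main case
  have hw' : (w + ⟨c^2, sq_nonneg c⟩ : ℝ≥0) ≠ 0 := by
    intro h
    apply hw
    have := congrArg (fun x : ℝ≥0 => (x:ℝ)) h
    push_cast at this
    have h2 : (0:ℝ) < c^2 := by positivity
    have := w.coe_nonneg
    ext
    push_cast
    have e : ((w + ⟨c^2, sq_nonneg c⟩ : ℝ≥0) : ℝ) = w + c^2 := rfl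
    rw [h, NNReal.coe_zero] at e
    nlinarith [w.coe_nonneg]
  have key1 : ∀ a : ℝ, ∫ z, f z ∂(gaussianReal (c * a) w)
      = ∫ z, gaussianPDFReal 0 w (z - c * a) * f z := by
    intro a
    rw [integral_gaussianReal_ne_zero _ hw]
    congr 1 with z
    rw [gaussianPDFReal_sub, zero_add]
  simp only [key1]
  rw [integral_gaussianReal_ne_zero _ one_ne_zero]
  rw [integral_gaussianReal_ne_zero _ hw']
  -- now: ∫ a, pdf1 a * ∫ z, pdfw (z - c a) * f z dz  da  = ∫ z, pdf_{w+c²} z * f z dz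
  have hGmeas : Measurable (fun q : ℝ × ℝ => gaussianPDFReal 0 1 q.1 * (gaussianPDFReal 0 w (q.2 - c * q.1) * f q.2)) := by
    apply ((measurable_gaussianPDFReal 0 1).comp measurable_fst).mul
    exact (((measurable_gaussianPDFReal 0 w).comp (measurable_snd.sub (measurable_fst.const_mul c))).mul (hf.comp measurable_snd))
  have hint_a : ∀ a : ℝ, Integrable (fun z => gaussianPDFReal 0 1 a * (gaussianPDFReal 0 w (z - c * a) * f z)) volume := by
    intro a
    have : Integrable (fun z => gaussianPDFReal 0 w (z - c * a)) volume := by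
      simpa only [gaussianPDFReal_sub, zero_add] using integrable_gaussianPDFReal (c*a) w
    exact ((this.bdd_mul (c := 1) (hf.aestronglyMeasurable) (ae_of_all _ fun z => by
      simpa using habs z)).const_mul _).congr (ae_of_all _ fun z => by ring)
  have hswapInt : Integrable (fun q : ℝ × ℝ => gaussianPDFReal 0 1 q.1 * (gaussianPDFReal 0 w (q.2 - c * q.1) * f q.2)) (volume.prod volume) := by
    rw [integrable_prod_iff hGmeas.aestronglyMeasurable]
    constructor
    · exact ae_of_all _ hint_a
    · apply Integrable.mono' (integrable_gaussianPDFReal 0 1)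
      · exact (hGmeas.aestronglyMeasurable.norm.integral_prod_right')
      · refine ae_of_all _ fun a => ?_
        have hb : ∀ z, ‖gaussianPDFReal 0 1 a * (gaussianPDFReal 0 w (z - c * a) * f z)‖
            ≤ gaussianPDFReal 0 1 a * gaussianPDFReal 0 w (z - c * a) := by
          intro z
          rw [norm_mul, norm_mul]
          simp only [Real.norm_eq_abs, abs_of_nonneg (gaussianPDFReal_nonneg _ _ _)]
          have h2 := habs z
          have hnn := gaussianPDFReal_nonneg 0 w (z - c*a)
          have hnn1 := gaussianPDFReal_nonneg 0 1 a
          calc gaussianPDFReal 0 1 a * (gaussianPDFReal 0 w (z - c * a) * |f z|)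
              ≤ gaussianPDFReal 0 1 a * (gaussianPDFReal 0 w (z - c * a) * 1) :=
                mul_le_mul_of_nonneg_left (mul_le_mul_of_nonneg_left h2 hnn) hnn1
            _ = gaussianPDFReal 0 1 a * gaussianPDFReal 0 w (z - c * a) := by ring
        rw [Real.norm_eq_abs, abs_of_nonneg (integral_nonneg (fun z => norm_nonneg _))]
        calc ∫ z, ‖gaussianPDFReal 0 1 a * (gaussianPDFReal 0 w (z - c * a) * f z)‖
            ≤ ∫ z, gaussianPDFReal 0 1 a * gaussianPDFReal 0 w (z - c * a) := by
              apply integral_mono_of_nonneg (ae_of_all _ fun z => norm_nonneg _) ?_ (ae_of_all _ hb)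
              have : Integrable (fun z => gaussianPDFReal 0 w (z - c * a)) volume := by
                simpa only [gaussianPDFReal_sub, zero_add] using integrable_gaussianPDFReal (c*a) w
              exact this.const_mul _
          _ = gaussianPDFReal 0 1 a * ∫ z, gaussianPDFReal 0 w (z - c * a) := integral_const_mul _ _
          _ ≤ gaussianPDFReal 0 1 a := by
              have : ∫ z, gaussianPDFReal 0 w (z - c * a) = 1 := by
                simp only [gaussianPDFReal_sub, zero_add]
                exact integral_gaussianPDFReal_eq_one (c*a) hw
              rw [this, mul_one]
  calc ∫ a, gaussianPDFReal 0 1 a * ∫ z, gaussianPDFReal 0 w (z - c * a) * f z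
      = ∫ a, ∫ z, gaussianPDFReal 0 1 a * (gaussianPDFReal 0 w (z - c * a) * f z) := by
        congr 1 with a
        rw [← integral_const_mul]
    _ = ∫ z, ∫ a, gaussianPDFReal 0 1 a * (gaussianPDFReal 0 w (z - c * a) * f z) := by
        exact integral_integral_swap hswapInt
    _ = ∫ z, gaussianPDFReal 0 (w + ⟨c^2, sq_nonneg c⟩) z * f z := by
        congr 1 with z
        calc ∫ a, gaussianPDFReal 0 1 a * (gaussianPDFReal 0 w (z - c * a) * f z)
            = (∫ a, gaussianPDFReal 0 1 a * gaussianPDFReal 0 w (z - c * a)) * f z := by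
              rw [← integral_mul_const]
              congr 1 with a
              ring
          _ = gaussianPDFReal 0 (w + ⟨c^2, sq_nonneg c⟩) z * f z := by
              rw [gaussKey w hw c hc z]

lemma bdd_integrable' {X : Type*} [MeasurableSpace X] (μ : Measure X) [IsFiniteMeasure μ]
    {f : X → ℝ} (hf : AEStronglyMeasurable f μ) (h0 : ∀ x, 0 ≤ f x) (h1 : ∀ x, f x ≤ 1) :
    Integrable f μ :=
  (integrable_const (1:ℝ)).mono' hf (ae_of_all _ fun x => by
    rw [Real.norm_eq_abs, abs_of_nonneg (h0 x)]; exact h1 x)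

lemma conv2 (s t : ℝ) (f : ℝ → ℝ) (hf : Measurable f)
    (h0 : ∀ x, 0 ≤ f x) (h1 : ∀ x, f x ≤ 1) :
    ∫ a, (∫ b, f (s * a + t * b) ∂(gaussianReal 0 1)) ∂(gaussianReal 0 1)
      = ∫ z, f (Real.sqrt (s^2 + t^2) * z) ∂(gaussianReal 0 1) := by
  have hmap : ∀ a : ℝ, Measure.map (fun b => s*a + t*b) (gaussianReal 0 1)
      = gaussianReal (s*a) (⟨t^2, sq_nonneg t⟩) := by
    intro a
    rw [show (fun b : ℝ => s*a + t*b) = ((s*a + ·) ∘ (t * ·)) from rfl]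
    rw [← Measure.map_map (by fun_prop) (by fun_prop)]
    rw [gaussianReal_map_const_mul t, gaussianReal_map_const_add]
    norm_num
    rfl
  have hinner : ∀ a : ℝ, ∫ b, f (s * a + t * b) ∂(gaussianReal 0 1)
      = ∫ z, f z ∂(gaussianReal (s*a) (⟨t^2, sq_nonneg t⟩)) := by
    intro a
    rw [← hmap a]
    exact (integral_map (by fun_prop) hf.aestronglyMeasurable).symm
  simp only [hinner]
  rw [mixKey s (⟨t^2, sq_nonneg t⟩) f hf h0 h1]
  have hrhs : ∫ z, f (Real.sqrt (s^2 + t^2) * z) ∂(gaussianReal 0 1)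
      = ∫ z, f z ∂(Measure.map (Real.sqrt (s^2+t^2) * ·) (gaussianReal 0 1)) :=
    (integral_map (by fun_prop) hf.aestronglyMeasurable).symm
  rw [hrhs, gaussianReal_map_const_mul]
  congr 2
  · ring
  · ext
    push_cast
    rw [Real.sq_sqrt (by positivity)]
    ring
    exact rfl

lemma sumInt : ∀ (n : ℕ) (θ : Fin n → ℝ) (f : ℝ → ℝ), Measurable f → (∀ x, 0 ≤ f x) → (∀ x, f x ≤ 1) →
    ∫ x, f (∑ i, θ i * x i) ∂(Measure.pi fun _ : Fin n => gaussianReal 0 1)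
      = ∫ z, f (Real.sqrt (∑ i, (θ i)^2) * z) ∂(gaussianReal 0 1) := by
  intro n
  induction n with
  | zero =>
    intro θ f hf h0 h1
    simp only [Finset.univ_eq_empty, Finset.sum_empty, Real.sqrt_zero, zero_mul]
    rw [integral_const, integral_const]
    simp
  | succ n ih =>
    intro θ f hf h0 h1
    have hmp := measurePreserving_piFinSuccAbove (fun _ : Fin (n+1) => gaussianReal 0 1) 0
    set e := MeasurableEquiv.piFinSuccAbove (fun _ : Fin (n+1) => ℝ) 0 with he
    set G : ℝ × (Fin n → ℝ) → ℝ := fun q => f (θ 0 * q.1 + ∑ j, θ j.succ * q.2 j) with hG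
    have hGmeas : Measurable G := by
      apply hf.comp
      exact (measurable_fst.const_mul _).add (Finset.measurable_sum _ fun j _ =>
        ((measurable_pi_apply j).comp measurable_snd).const_mul _)
    have hcomp : ∀ x : Fin (n+1) → ℝ, f (∑ i, θ i * x i) = G (e x) := by
      intro x
      rw [hG]
      simp only [he, MeasurableEquiv.piFinSuccAbove_apply, Fin.insertNthEquiv_symm_apply,
        Fin.removeNth, Fin.zero_succAbove]
      rw [Fin.sum_univ_succ]
    calc ∫ x, f (∑ i, θ i * x i) ∂(Measure.pi fun _ : Fin (n+1) => gaussianReal 0 1)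
        = ∫ x, G (e x) ∂(Measure.pi fun _ : Fin (n+1) => gaussianReal 0 1) := by
          simp only [hcomp]
      _ = ∫ q, G q ∂((gaussianReal 0 1).prod (Measure.pi fun _ : Fin n => gaussianReal 0 1)) := by
          exact hmp.integral_comp e.measurableEmbedding G
      _ = ∫ a, ∫ y, f (θ 0 * a + ∑ j, θ j.succ * y j) ∂(Measure.pi fun _ : Fin n => gaussianReal 0 1) ∂(gaussianReal 0 1) := by
          rw [integral_prod _ (bdd_integrable' _ hGmeas.aestronglyMeasurable (fun q => h0 _) (fun q => h1 _))]
      _ = ∫ a, ∫ z, f (θ 0 * a + Real.sqrt (∑ j : Fin n, (θ j.succ)^2) * z) ∂(gaussianReal 0 1) ∂(gaussianReal 0 1) := by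
          congr 1 with a
          exact ih (fun j => θ j.succ) (fun w => f (θ 0 * a + w)) (hf.comp (measurable_const.add measurable_id)) (fun x => h0 _) (fun x => h1 _)
      _ = ∫ z, f (Real.sqrt ((θ 0)^2 + (Real.sqrt (∑ j : Fin n, (θ j.succ)^2))^2) * z) ∂(gaussianReal 0 1) := by
          exact conv2 (θ 0) (Real.sqrt (∑ j : Fin n, (θ j.succ)^2)) f hf h0 h1
      _ = ∫ z, f (Real.sqrt (∑ i, (θ i)^2) * z) ∂(gaussianReal 0 1) := by
          congr 2 with z
          rw [Real.sq_sqrt (by positivity), Fin.sum_univ_succ]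

lemma prodInt (p : ℕ) (α : ℝ) (θ : Fin p → ℝ) (f : ℝ → ℝ) (hf : Measurable f)
    (h0 : ∀ x, 0 ≤ f x) (h1 : ∀ x, f x ≤ 1) :
    ∫ yx : ℝ × (Fin p → ℝ), f (yx.1 - α - ∑ i, θ i * yx.2 i)
        ∂((gaussianReal 0 1).prod (Measure.pi fun _ : Fin p => gaussianReal 0 1))
      = ∫ z, f (Real.sqrt (1 + ∑ i, (θ i)^2) * z - α) ∂(gaussianReal 0 1) := by
  have hFmeas : Measurable (fun yx : ℝ × (Fin p → ℝ) => f (yx.1 - α - ∑ i, θ i * yx.2 i)) := by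
    apply hf.comp
    exact (measurable_fst.sub measurable_const).sub (Finset.measurable_sum _ fun j _ =>
      ((measurable_pi_apply j).comp measurable_snd).const_mul _)
  rw [integral_prod _ (bdd_integrable' _ hFmeas.aestronglyMeasurable (fun q => h0 _) (fun q => h1 _))]
  have hinner : ∀ y : ℝ, ∫ x, f (y - α - ∑ i, θ i * x i) ∂(Measure.pi fun _ : Fin p => gaussianReal 0 1)
      = ∫ z, f (y - α - Real.sqrt (∑ i, (θ i)^2) * z) ∂(gaussianReal 0 1) :=
    fun y => sumInt p θ (fun w => f (y - α - w))
      (hf.comp ((measurable_const.sub measurable_id))) (fun x => h0 _) (fun x => h1 _)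
  simp only [hinner]
  have := conv2 1 (-(Real.sqrt (∑ i, (θ i)^2))) (fun w => f (w - α))
    (hf.comp (measurable_id.sub measurable_const)) (fun x => h0 _) (fun x => h1 _)
  simp only [one_mul, neg_mul] at this
  calc ∫ y, ∫ z, f (y - α - Real.sqrt (∑ i, (θ i)^2) * z) ∂(gaussianReal 0 1) ∂(gaussianReal 0 1)
      = ∫ y, ∫ z, f (y + -(Real.sqrt (∑ i, (θ i)^2) * z) - α) ∂(gaussianReal 0 1) ∂(gaussianReal 0 1) := by
        congr 1 with y; congr 1 with z; congr 1; ring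
    _ = ∫ z, f (Real.sqrt (1^2 + (-(Real.sqrt (∑ i, (θ i)^2)))^2) * z - α) ∂(gaussianReal 0 1) := this
    _ = ∫ z, f (Real.sqrt (1 + ∑ i, (θ i)^2) * z - α) ∂(gaussianReal 0 1) := by
        congr 2 with z
        congr 2
        rw [neg_pow, one_pow]
        rw [show (-1:ℝ)^2 * (Real.sqrt (∑ i, (θ i)^2))^2 = (Real.sqrt (∑ i, (θ i)^2))^2 from by ring]
        rw [Real.sq_sqrt (by positivity)]

-- Anderson: gaussian measure of translated symmetric interval
lemma pdf_le {x y : ℝ} (h : |y| ≤ |x|) : gaussianPDFReal 0 1 x ≤ gaussianPDFReal 0 1 y := by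
  rw [gaussianPDFReal_def]
  simp only
  apply mul_le_mul_of_nonneg_left _ (by positivity)
  apply Real.exp_le_exp.2
  rw [sub_zero, sub_zero]
  have hy : y^2 ≤ x^2 := by nlinarith [sq_abs x, sq_abs y, abs_nonneg y]
  have h1 : ((1:ℝ≥0):ℝ) = 1 := rfl
  rw [h1]
  linarith [hy]

lemma and1 (a : ℝ) (ha : 0 ≤ a) (m : ℝ) :
    (gaussianReal 0 1) (Icc (m - a) (m + a)) ≤ (gaussianReal 0 1) (Icc (-a) a) := by
  have hφcont : Continuous (gaussianPDFReal 0 1) := by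
    rw [gaussianPDFReal_def]; fun_prop
  set φ : ℝ → ℝ := gaussianPDFReal 0 1 with hφ
  set F : ℝ → ℝ := fun x => ∫ t in (0:ℝ)..x, φ t with hF
  have hFderiv : ∀ x : ℝ, HasDerivAt F (φ x) x := fun x =>
    (hφcont.integral_hasStrictDerivAt 0 x).hasDerivAt
  have hgicc : ∀ c d : ℝ, c ≤ d → (gaussianReal 0 1) (Icc c d) = ENNReal.ofReal (F d - F c) := by
    intro c d hcd
    rw [gaussianReal_apply_eq_integral 0 one_ne_zero]
    congr 1
    have h1 : ∫ x in Icc c d, φ x = ∫ x in c..d, φ x := by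
      rw [integral_Icc_eq_integral_Ioc, intervalIntegral.integral_of_le hcd]
    rw [h1, hF]
    rw [eq_sub_iff_add_eq, add_comm, intervalIntegral.integral_add_adjacent_intervals
      (hφcont.intervalIntegrable 0 c) (hφcont.intervalIntegrable c d)]
  have key : ∀ m' : ℝ, 0 ≤ m' → (gaussianReal 0 1) (Icc (m' - a) (m' + a)) ≤ (gaussianReal 0 1) (Icc (-a) a) := by
    intro m hm
    rw [hgicc _ _ (by linarith), hgicc _ _ (by linarith)]
    apply ENNReal.ofReal_le_ofReal
    have hdiff : ∀ x : ℝ, HasDerivAt (fun m => F (m + a) - F (m - a)) (φ (x + a) - φ (x - a)) x := by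
      intro x
      have h1 : HasDerivAt (fun m : ℝ => F (m + a)) (φ (x + a)) x := by
        exact HasDerivAt.comp_add_const x a (hFderiv (x + a))
      have h2 : HasDerivAt (fun m : ℝ => F (m - a)) (φ (x - a)) x := by
        exact HasDerivAt.comp_sub_const x a (hFderiv (x - a))
      exact h1.sub h2
    have hanti : AntitoneOn (fun m => F (m + a) - F (m - a)) (Ici 0) := by
      apply antitoneOn_of_deriv_nonpos (convex_Ici 0)
      · exact fun x _ => (hdiff x).continuousAt.continuousWithinAt
      · exact fun x _ => (hdiff x).differentiableAt.differentiableWithinAt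
      · intro x hx
        rw [(hdiff x).deriv]
        rw [interior_Ici] at hx
        have hxpos : (0:ℝ) < x := hx
        rw [sub_nonpos]
        apply pdf_le
        rw [abs_of_nonneg (by linarith : (0:ℝ) ≤ x + a)]
        rw [abs_le]
        constructor <;> linarith
    have := hanti (self_mem_Ici) hm hm
    simp only [zero_add, zero_sub] at this
    have hFa : F (-a) = F (0 - a) := by norm_num
    linarith [this]
  rcases le_or_gt 0 m with hm | hm
  · exact key m hm
  · have hneg : (gaussianReal 0 1) (Icc (m - a) (m + a)) = (gaussianReal 0 1) (Icc (-m - a) (-m + a)) := by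
      have hmap : Measure.map (fun x : ℝ => -1 * x) (gaussianReal 0 1) = gaussianReal 0 1 := by
        rw [gaussianReal_map_const_mul]
        norm_num
      conv_lhs => rw [← hmap]
      rw [Measure.map_apply (by fun_prop) measurableSet_Icc]
      congr 1
      ext x
      simp only [mem_preimage, mem_Icc, neg_one_mul]
      constructor
      · rintro ⟨h1', h2'⟩; constructor <;> linarith
      · rintro ⟨h1', h2'⟩; constructor <;> linarith
    rw [hneg]
    exact key (-m) (by linarith)

lemma gauss_singleton (x : ℝ) : (gaussianReal 0 1) {x} = 0 :=
  (gaussianReal_absolutelyContinuous 0 one_ne_zero) (measure_singleton x)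

instance : NullSingletonClass (gaussianReal 0 1) := ⟨gauss_singleton⟩

lemma and2 (C : Set ℝ) (hC : ∀ u ∈ C, ∀ u', |u'| ≤ |u| → u' ∈ C) (m : ℝ) :
    (gaussianReal 0 1) {w : ℝ | w + m ∈ C} ≤ (gaussianReal 0 1) C := by
  rcases eq_empty_or_nonempty C with h | ⟨u₀, hu₀⟩
  · subst h; simp
  by_cases hbdd : BddAbove (abs '' C)
  · set a := sSup (abs '' C) with hadef
    have hmem : |u₀| ∈ abs '' C := ⟨u₀, hu₀, rfl⟩
    have ha0 : 0 ≤ a := le_trans (abs_nonneg u₀) (le_csSup hbdd hmem)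
    have hsub : C ⊆ Icc (-a) a := fun u hu => abs_le.1 (le_csSup hbdd ⟨u, hu, rfl⟩)
    have hsup : Ioo (-a) a ⊆ C := by
      intro u' hu'
      have h' : |u'| < a := abs_lt.2 ⟨hu'.1, hu'.2⟩
      obtain ⟨x, hx, hlt⟩ := exists_lt_of_lt_csSup ⟨|u₀|, hmem⟩ h'
      obtain ⟨v, hvC, rfl⟩ := hx
      exact hC v hvC u' hlt.le
    have hIccIoo : (gaussianReal 0 1) (Icc (-a) a) = (gaussianReal 0 1) (Ioo (-a) a) :=
      (measure_congr Ioo_ae_eq_Icc).symm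
    calc (gaussianReal 0 1) {w : ℝ | w + m ∈ C}
        ≤ (gaussianReal 0 1) (Icc ((-m) - a) ((-m) + a)) := by
          apply measure_mono
          intro w hw
          have := hsub hw
          simp only [mem_Icc] at this ⊢
          constructor <;> linarith [this.1, this.2]
      _ ≤ (gaussianReal 0 1) (Icc (-a) a) := and1 a ha0 (-m)
      _ = (gaussianReal 0 1) (Ioo (-a) a) := hIccIoo
      _ ≤ (gaussianReal 0 1) C := measure_mono hsup
  · have hCuniv : C = univ := by
      apply eq_univ_of_forall
      intro u'
      obtain ⟨x, hx, hgt⟩ := not_bddAbove_iff.1 hbdd |u'|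
      obtain ⟨v, hvC, rfl⟩ := hx
      exact hC v hvC u' hgt.le
    subst hCuniv
    simp

lemma and3 (ρ : ℝ → ℝ) (hm : Measurable ρ) (heven : ∀ u, ρ (-u) = ρ u)
    (hmono : MonotoneOn ρ (Ici 0)) (h0 : ∀ x, 0 ≤ ρ x) (h1 : ∀ x, ρ x ≤ 1) (m : ℝ) :
    ∫ z, ρ z ∂(gaussianReal 0 1) ≤ ∫ z, ρ (z + m) ∂(gaussianReal 0 1) := by
  have habs : ∀ u, ρ u = ρ |u| := by
    intro u
    rcases abs_cases u with ⟨h, _⟩ | ⟨h, _⟩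
    · rw [h]
    · rw [h, heven]
  have hm' : Measurable (fun z => ρ (z + m)) := hm.comp (measurable_id.add_const m)
  rw [integral_eq_lintegral_of_nonneg_ae (ae_of_all _ h0) hm.aestronglyMeasurable,
    integral_eq_lintegral_of_nonneg_ae (ae_of_all _ (fun z => h0 _)) hm'.aestronglyMeasurable]
  have hfin : ∫⁻ z, ENNReal.ofReal (ρ (z + m)) ∂(gaussianReal 0 1) ≠ ⊤ := by
    apply ne_top_of_le_ne_top (by simp : (1:ℝ≥0∞) ≠ ⊤)
    calc ∫⁻ z, ENNReal.ofReal (ρ (z + m)) ∂(gaussianReal 0 1)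
        ≤ ∫⁻ _, 1 ∂(gaussianReal 0 1) := lintegral_mono fun z => ENNReal.ofReal_le_one.2 (h1 _)
      _ = 1 := by simp
  apply ENNReal.toReal_mono hfin
  rw [lintegral_eq_lintegral_meas_lt _ (ae_of_all _ h0) hm.aemeasurable,
    lintegral_eq_lintegral_meas_lt _ (ae_of_all _ (fun z => h0 _)) hm'.aemeasurable]
  apply lintegral_mono
  intro t
  set C : Set ℝ := {u | ρ u ≤ t} with hCdef
  have hCmeas : MeasurableSet C := measurableSet_le (hm) measurable_const
  have hCprop : ∀ u ∈ C, ∀ u', |u'| ≤ |u| → u' ∈ C := by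
    intro u hu u' hle
    have : ρ u' ≤ ρ u := by
      rw [habs u', habs u]
      exact hmono (abs_nonneg u') (abs_nonneg u) hle
    exact le_trans this hu
  have h2 := and2 C hCprop m
  have hU1 : {a : ℝ | t < ρ a} = Cᶜ := by
    ext x; simp [hCdef, not_le]
  have hU2 : {a : ℝ | t < ρ (a + m)} = {w : ℝ | w + m ∈ C}ᶜ := by
    ext x; simp [hCdef, not_le]
  show (gaussianReal 0 1) {a : ℝ | t < ρ a} ≤ (gaussianReal 0 1) {a : ℝ | t < ρ (a + m)}
  rw [hU1, hU2]
  have hCm : MeasurableSet {w : ℝ | w + m ∈ C} := (measurable_id.add_const m) hCmeas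
  rw [prob_compl_eq_one_sub hCmeas, prob_compl_eq_one_sub hCm]
  exact tsub_le_tsub_left h2 1

lemma psi_min (g₂ g₂' φ₂ : ℝ → ℝ)
    (hg₂_deriv : ∀ s ∈ Set.Ioi (0:ℝ), HasDerivAt g₂ (g₂' s) s)
    (hφ₂ : ∀ s, φ₂ s = -s * g₂' s)
    (σM : ℝ) (hσM : 0 < σM)
    (hφ₂_mono : MonotoneOn φ₂ (Set.Ioc 0 σM))
    (hφ₂_anti : AntitoneOn φ₂ (Set.Ici σM))
    (M : ℝ) (hM : 1 < M)
    (γ σ : ℝ) (hγ : 0 < γ) (hγσ : γ ≤ σ) :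
    ∀ s ∈ Icc γ σ, min (g₂ (γ/M) - g₂ γ) (g₂ (σ/M) - g₂ σ) ≤ g₂ (s/M) - g₂ s := by
  have hM0 : (0:ℝ) < M := by linarith
  set ψ : ℝ → ℝ := fun x => g₂ (x/M) - g₂ x with hψdef
  have hψd : ∀ x : ℝ, 0 < x → HasDerivAt ψ (g₂' (x/M) * (1/M) - g₂' x) x := by
    intro x hx
    have h1 : HasDerivAt (fun y : ℝ => y / M) (1/M) x := by
      simpa using (hasDerivAt_id x).div_const M
    have h2 : HasDerivAt (fun y : ℝ => g₂ (y / M)) (g₂' (x/M) * (1/M)) x :=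
      (hg₂_deriv (x/M) (by exact div_pos hx hM0)).comp x h1
    exact h2.sub (hg₂_deriv x hx)
  have hg₂'_eq : ∀ y : ℝ, y ≠ 0 → g₂' y = -(φ₂ y)/y := by
    intro y hy
    have := hφ₂ y
    field_simp
    linarith [this]
  have hderiv_eq : ∀ x : ℝ, 0 < x → deriv ψ x = (φ₂ x - φ₂ (x/M)) / x := by
    intro x hx
    rw [(hψd x hx).deriv, hg₂'_eq x hx.ne', hg₂'_eq (x/M) (by positivity)]
    field_simp
    ring
  have hDpos : ∀ x : ℝ, 0 < x → x ≤ σM → 0 ≤ φ₂ x - φ₂ (x/M) := by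
    intro x hx hxM
    have hxd : x / M ≤ x := div_le_self hx.le hM.le
    exact sub_nonneg.2 (hφ₂_mono ⟨by positivity, le_trans hxd hxM⟩ ⟨hx, hxM⟩ hxd)
  have hDneg : ∀ x : ℝ, σM * M ≤ x → φ₂ x - φ₂ (x/M) ≤ 0 := by
    intro x hx
    have h1 : σM ≤ x / M := (le_div_iff₀ hM0).2 hx
    have h2 : x / M ≤ x := div_le_self (by nlinarith) hM.le
    exact sub_nonpos.2 (hφ₂_anti h1 (le_trans h1 h2) h2)
  have hDanti : AntitoneOn (fun x => φ₂ x - φ₂ (x/M)) (Icc σM (σM*M)) := by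
    intro x hx y hy hxy
    apply sub_le_sub (hφ₂_anti hx.1 hy.1 hxy)
    have h0x : (0:ℝ) < x := lt_of_lt_of_le hσM hx.1
    have h0y : (0:ℝ) < y := lt_of_lt_of_le hσM hy.1
    apply hφ₂_mono ⟨by positivity, (div_le_iff₀ hM0).2 hx.2⟩ ⟨by positivity, (div_le_iff₀ hM0).2 hy.2⟩
    gcongr
  set S : Set ℝ := {x ∈ Icc σM (σM*M) | 0 ≤ φ₂ x - φ₂ (x/M)} with hSdef
  have hσMS : σM ∈ S := ⟨⟨le_refl _, by nlinarith⟩, hDpos σM hσM le_rfl⟩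
  have hSne : S.Nonempty := ⟨σM, hσMS⟩
  have hSbd : BddAbove S := ⟨σM*M, fun x hx => hx.1.2⟩
  set x₀ : ℝ := sSup S with hx₀def
  have hx₀lb : σM ≤ x₀ := le_csSup hSbd hσMS
  have hx₀ub : x₀ ≤ σM*M := csSup_le hSne (fun x hx => hx.1.2)
  have hA : ∀ x : ℝ, 0 < x → x < x₀ → 0 ≤ φ₂ x - φ₂ (x/M) := by
    intro x hx hlt
    rcases le_or_gt x σM with h | h
    · exact hDpos x hx h
    · obtain ⟨x', hx'S, hgt⟩ := exists_lt_of_lt_csSup hSne hlt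
      have hmem : x ∈ Icc σM (σM*M) := ⟨h.le, le_trans hgt.le hx'S.1.2⟩
      exact le_trans hx'S.2 (hDanti hmem hx'S.1 hgt.le)
  have hB : ∀ x : ℝ, x₀ < x → φ₂ x - φ₂ (x/M) ≤ 0 := by
    intro x hgt
    rcases le_or_gt (σM*M) x with h | h
    · exact hDneg x h
    · have hmem : x ∈ Icc σM (σM*M) := ⟨le_trans hx₀lb hgt.le, h.le⟩
      by_contra hcon
      push_neg at hcon
      exact absurd (le_csSup hSbd ⟨hmem, hcon.le⟩) (not_le.2 hgt)
  set x₁ : ℝ := max γ (min σ x₀) with hx₁def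
  have hx₁mem : x₁ ∈ Icc γ σ := ⟨le_max_left _ _, max_le hγσ (min_le_left _ _)⟩
  have hmono : MonotoneOn ψ (Icc γ x₁) := by
    apply monotoneOn_of_deriv_nonneg (convex_Icc _ _)
    · exact fun x hx => (hψd x (lt_of_lt_of_le hγ hx.1)).continuousAt.continuousWithinAt
    · intro x hx
      rw [interior_Icc] at hx
      exact (hψd x (lt_trans hγ hx.1)).differentiableAt.differentiableWithinAt
    · intro x hx
      rw [interior_Icc] at hx
      have hx0 : (0:ℝ) < x := lt_trans hγ hx.1
      rw [hderiv_eq x hx0]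
      apply div_nonneg _ hx0.le
      apply hA x hx0
      by_contra hcon
      push_neg at hcon
      have : x₁ ≤ x := max_le hx.1.le (le_trans (min_le_right _ _) hcon)
      exact absurd hx.2 (not_lt.2 this)
  have hanti : AntitoneOn ψ (Icc x₁ σ) := by
    apply antitoneOn_of_deriv_nonpos (convex_Icc _ _)
    · exact fun x hx => (hψd x (lt_of_lt_of_le (lt_of_lt_of_le hγ hx₁mem.1) hx.1)).continuousAt.continuousWithinAt
    · intro x hx
      rw [interior_Icc] at hx
      exact (hψd x (lt_trans (lt_of_lt_of_le hγ hx₁mem.1) hx.1)).differentiableAt.differentiableWithinAt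
    · intro x hx
      rw [interior_Icc] at hx
      have hx0 : (0:ℝ) < x := lt_trans (lt_of_lt_of_le hγ hx₁mem.1) hx.1
      rw [hderiv_eq x hx0]
      apply div_nonpos_of_nonpos_of_nonneg _ hx0.le
      apply hB
      rcases min_cases σ x₀ with ⟨heq, _⟩ | ⟨heq, hle⟩
      · exfalso
        have h2 : σ ≤ x₁ := by rw [hx₁def, heq]; exact le_max_right _ _
        exact absurd hx.2 (not_lt.2 (le_trans h2 hx.1.le))
      · have : x₀ ≤ x₁ := by rw [hx₁def, heq]; exact le_max_right _ _
        exact lt_of_le_of_lt this hx.1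
  intro s hs
  rcases le_or_gt s x₁ with h | h
  · calc min (g₂ (γ/M) - g₂ γ) (g₂ (σ/M) - g₂ σ) ≤ g₂ (γ/M) - g₂ γ := min_le_left _ _
      _ ≤ g₂ (s/M) - g₂ s := hmono ⟨le_refl _, hx₁mem.1⟩ ⟨hs.1, h⟩ hs.1
  · calc min (g₂ (γ/M) - g₂ γ) (g₂ (σ/M) - g₂ σ) ≤ g₂ (σ/M) - g₂ σ := min_le_right _ _
      _ ≤ g₂ (s/M) - g₂ s := hanti ⟨h.le, hs.2⟩ ⟨hx₁mem.2, le_refl _⟩ hs.2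

set_option maxHeartbeats 2000000 in
/-- Under the Gaussian model, any minimizer (α, θ) of the MM-criterion at a
scale s ∈ [γ_{b,ε}, σ_{b,ε}] over a contaminated distribution H ∈ V_ε satisfies
‖θ‖ ≤ max{ℓ(ε), u(ε)}. -/
theorem stmt5 (p : ℕ) (hp : 1 ≤ p) (ρ₁ ρ₂ : ℝ → ℝ)
    -- (A3) for ρ₁:
    (hρ₁_meas : Measurable ρ₁)
    (hρ₁_even : ∀ u, ρ₁ (-u) = ρ₁ u)
    (hρ₁_mono : MonotoneOn ρ₁ (Set.Ici 0))
    (hρ₁_zero : ρ₁ 0 = 0)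
    (hρ₁_bdd : ∀ u, 0 ≤ ρ₁ u ∧ ρ₁ u ≤ 1)
    (hρ₁_lim : Tendsto ρ₁ atTop (nhds 1))
    -- (A3) for ρ₂:
    (hρ₂_meas : Measurable ρ₂)
    (hρ₂_even : ∀ u, ρ₂ (-u) = ρ₂ u)
    (hρ₂_mono : MonotoneOn ρ₂ (Set.Ici 0))
    (hρ₂_zero : ρ₂ 0 = 0)
    (hρ₂_bdd : ∀ u, 0 ≤ ρ₂ u ∧ ρ₂ u ≤ 1)
    (hρ₂_lim : Tendsto ρ₂ atTop (nhds 1))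
    (g₁ g₂ : ℝ → ℝ)
    (hg₁ : ∀ s, 0 < s → g₁ s = ∫ z, ρ₁ (z / s) ∂(gaussianReal 0 1))
    (hg₂ : ∀ s, 0 < s → g₂ s = ∫ z, ρ₂ (z / s) ∂(gaussianReal 0 1))
    (b ε : ℝ) (hε : 0 < ε) (hεb : ε < b) (hb : b < 1)
    -- σ_{b,ε} = g₁⁻¹((b−ε)/(1−ε)) and γ_{b,ε} = g₁⁻¹(b/(1−ε)):
    (σbε γbε : ℝ) (hσ_pos : 0 < σbε) (hγ_pos : 0 < γbε)
    (hσ : g₁ σbε = (b - ε) / (1 - ε)) (hγ : g₁ γbε = b / (1 - ε))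
    -- Condition (A4) for g₂:
    (g₂' : ℝ → ℝ)
    (hg₂_deriv : ∀ s ∈ Set.Ioi (0 : ℝ), HasDerivAt g₂ (g₂' s) s)
    (hg₂'_cont : ContinuousOn g₂' (Set.Ioi 0))
    (φ₂ : ℝ → ℝ) (hφ₂ : ∀ s, φ₂ s = -s * g₂' s)
    (hφ₂_pos : ∀ s ∈ Set.Ioi (0 : ℝ), 0 < φ₂ s)
    (σM : ℝ) (hσM : 0 < σM)
    (hφ₂_mono : MonotoneOn φ₂ (Set.Ioc 0 σM))
    (hφ₂_anti : AntitoneOn φ₂ (Set.Ici σM))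
    -- the value g₂(γ_{b,ε}) + ε/(1−ε) lies below 1:
    (hlt : g₂ γbε + ε / (1 - ε) < 1)
    -- sℓ = g₂⁻¹(g₂(σ_{b,ε}) + ε/(1−ε)) and su = g₂⁻¹(g₂(γ_{b,ε}) + ε/(1−ε)):
    (sℓ su : ℝ) (hsℓ_pos : 0 < sℓ) (hsu_pos : 0 < su)
    (hsℓ : g₂ sℓ = g₂ σbε + ε / (1 - ε))
    (hsu : g₂ su = g₂ γbε + ε / (1 - ε))
    (ℓ u : ℝ)
    (hℓ : ℓ = Real.sqrt ((σbε / sℓ) ^ 2 - 1))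
    (hu : u = Real.sqrt ((γbε / su) ^ 2 - 1))
    -- the contaminated distribution H ∈ V_ε:
    (Hstar : Measure (ℝ × (Fin p → ℝ))) (hHstar : IsProbabilityMeasure Hstar)
    (H : Measure (ℝ × (Fin p → ℝ)))
    (hH : H = ENNReal.ofReal (1 - ε) •
        ((gaussianReal 0 1).prod (Measure.pi fun _ : Fin p => gaussianReal 0 1)) +
        ENNReal.ofReal ε • Hstar)
    (s : ℝ) (hs : s ∈ Set.Icc γbε σbε)
    (α : ℝ) (θ : Fin p → ℝ)
    (hmin : ∀ α' : ℝ, ∀ θ' : Fin p → ℝ,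
        ∫ yx, ρ₂ ((yx.1 - α - ∑ i, θ i * yx.2 i) / s) ∂H ≤
        ∫ yx, ρ₂ ((yx.1 - α' - ∑ i, θ' i * yx.2 i) / s) ∂H) :
    Real.sqrt (∑ i, θ i ^ 2) ≤ max ℓ u := by
  have hε1 : (0:ℝ) < 1 - ε := by linarith
  have hspos : 0 < s := lt_of_lt_of_le hγ_pos hs.1
  have hγσ : γbε ≤ σbε := le_trans hs.1 hs.2
  set c : ℝ := ε / (1 - ε) with hcdef
  have hcpos : 0 < c := div_pos hε hε1
  set γm : Measure ℝ := gaussianReal 0 1 with hγm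
  set μ₀ : Measure (ℝ × (Fin p → ℝ)) :=
    (gaussianReal 0 1).prod (Measure.pi fun _ : Fin p => gaussianReal 0 1) with hμ₀
  have hprob₀ : IsProbabilityMeasure μ₀ := by rw [hμ₀]; infer_instance
  set T : ℝ := Real.sqrt (1 + ∑ i, (θ i)^2) with hT
  have hT1 : 1 ≤ T := by
    rw [hT]
    nth_rewrite 1 [show (1:ℝ) = Real.sqrt 1 from (Real.sqrt_one).symm]
    apply Real.sqrt_le_sqrt
    have : (0:ℝ) ≤ ∑ i, (θ i)^2 := by positivity
    linarith
  have hT0 : 0 < T := lt_of_lt_of_le one_pos hT1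
  -- f₁ and f₂
  set f₁ : ℝ × (Fin p → ℝ) → ℝ := fun yx => ρ₂ ((yx.1 - α - ∑ i, θ i * yx.2 i) / s) with hf₁
  set f₂ : ℝ × (Fin p → ℝ) → ℝ := fun yx => ρ₂ (yx.1 / s) with hf₂
  have hf₁meas : Measurable f₁ := by
    apply hρ₂_meas.comp
    apply Measurable.div_const
    exact (measurable_fst.sub measurable_const).sub (Finset.measurable_sum _ fun j _ =>
      ((measurable_pi_apply j).comp measurable_snd).const_mul _)
  have hf₂meas : Measurable f₂ := hρ₂_meas.comp (measurable_fst.div_const s)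
  -- split integrals over H
  have hsplit : ∀ f : ℝ × (Fin p → ℝ) → ℝ, Measurable f → (∀ x, 0 ≤ f x) → (∀ x, f x ≤ 1) →
      ∫ yx, f yx ∂H = (1 - ε) * ∫ yx, f yx ∂μ₀ + ε * ∫ yx, f yx ∂Hstar := by
    intro f hfm h0 h1
    rw [hH]
    have h₁ : Integrable f (ENNReal.ofReal (1 - ε) • μ₀) := by
      rw [integrable_smul_measure (by simp; linarith) ENNReal.ofReal_ne_top]
      exact bdd_integrable' _ hfm.aestronglyMeasurable h0 h1
    have h₂ : Integrable f (ENNReal.ofReal ε • Hstar) := by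
      rw [integrable_smul_measure (by simp [hε]) ENNReal.ofReal_ne_top]
      exact bdd_integrable' _ hfm.aestronglyMeasurable h0 h1
    rw [integral_add_measure h₁ h₂, integral_smul_measure, integral_smul_measure,
      ENNReal.toReal_ofReal hε1.le, ENNReal.toReal_ofReal hε.le]
    rfl
  -- the minimality inequality at (0, 0)
  have hkey : ∫ yx, f₁ yx ∂H ≤ ∫ yx, f₂ yx ∂H := by
    have := hmin 0 (fun _ => 0)
    simpa using this
  rw [hsplit f₁ hf₁meas (fun x => (hρ₂_bdd _).1) (fun x => (hρ₂_bdd _).2),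
    hsplit f₂ hf₂meas (fun x => (hρ₂_bdd _).1) (fun x => (hρ₂_bdd _).2)] at hkey
  have hIstar : 0 ≤ ∫ yx, f₁ yx ∂Hstar := integral_nonneg fun x => (hρ₂_bdd _).1
  have hJstar : ∫ yx, f₂ yx ∂Hstar ≤ 1 := by
    calc ∫ yx, f₂ yx ∂Hstar ≤ ∫ _, 1 ∂Hstar := by
          apply integral_mono (bdd_integrable' _ hf₂meas.aestronglyMeasurable
            (fun x => (hρ₂_bdd _).1) (fun x => (hρ₂_bdd _).2)) (integrable_const 1)
          exact fun x => (hρ₂_bdd _).2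
      _ = 1 := by simp
  -- identify I₀ and J₀
  have hJ₀ : ∫ yx, f₂ yx ∂μ₀ = g₂ s := by
    have := prodInt p 0 (fun _ => 0) (fun w => ρ₂ (w / s))
      (hρ₂_meas.comp (measurable_id.div_const s)) (fun x => (hρ₂_bdd _).1) (fun x => (hρ₂_bdd _).2)
    simp only [zero_mul, Finset.sum_const_zero, sub_zero, ne_eq, OfNat.ofNat_ne_zero,
      not_false_eq_true, zero_pow, add_zero, Real.sqrt_one, one_mul] at this
    rw [hg₂ s hspos]
    exact this
  have hI₀ : ∫ yx, f₁ yx ∂μ₀ = ∫ z, ρ₂ ((T * z - α) / s) ∂γm := by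
    have := prodInt p α θ (fun w => ρ₂ (w / s))
      (hρ₂_meas.comp (measurable_id.div_const s)) (fun x => (hρ₂_bdd _).1) (fun x => (hρ₂_bdd _).2)
    rw [← hT] at this
    exact this
  -- Anderson bound: g₂ (s/T) ≤ I₀
  have hsT : 0 < s / T := div_pos hspos hT0
  have hAnd : g₂ (s / T) ≤ ∫ z, ρ₂ ((T * z - α) / s) ∂γm := by
    set ρt : ℝ → ℝ := fun w => ρ₂ (T * w / s) with hρt
    have hρtm : Measurable ρt := hρ₂_meas.comp ((measurable_id.const_mul T).div_const s)
    have hρte : ∀ w, ρt (-w) = ρt w := by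
      intro w
      rw [hρt]
      simp only
      rw [show T * -w / s = -(T * w / s) from by ring, hρ₂_even]
    have hρtmono : MonotoneOn ρt (Ici 0) := by
      intro a ha b hb hab
      have h1 : T * a / s ≤ T * b / s := by gcongr
      have ha' : (0:ℝ) ≤ T * a / s := by
        apply div_nonneg _ hspos.le
        exact mul_nonneg hT0.le ha
      have hb' : (0:ℝ) ≤ T * b / s := by
        apply div_nonneg _ hspos.le
        exact mul_nonneg hT0.le hb
      exact hρ₂_mono (mem_Ici.2 ha') (mem_Ici.2 hb') h1
    have h3 := and3 ρt hρtm hρte hρtmono (fun x => (hρ₂_bdd _).1) (fun x => (hρ₂_bdd _).2) (-α / T)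
    have hl : ∫ z, ρt z ∂γm = g₂ (s / T) := by
      rw [hg₂ (s/T) hsT]
      congr 1 with z
      rw [hρt]
      congr 1
      field_simp
    have hr : ∫ z, ρt (z + -α / T) ∂γm = ∫ z, ρ₂ ((T * z - α) / s) ∂γm := by
      congr 1 with z
      rw [hρt]
      congr 1
      field_simp
      ring
    rw [hl, hr] at h3
    exact h3
  -- combine: g₂ (s/T) ≤ g₂ s + c
  have hmain : g₂ (s / T) ≤ g₂ s + c := by
    have hmul1 : 0 ≤ ε * ∫ yx, f₁ yx ∂Hstar := mul_nonneg hε.le hIstar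
    have hmul2 : ε * ∫ yx, f₂ yx ∂Hstar ≤ ε := mul_le_of_le_one_right hε.le hJstar
    rw [hJ₀, hI₀] at hkey
    have hA2 : (1-ε) * g₂ (s/T) ≤ (1-ε) * ∫ z, ρ₂ ((T * z - α) / s) ∂γm :=
      mul_le_mul_of_nonneg_left hAnd hε1.le
    set I1 := ∫ z, ρ₂ ((T * z - α) / s) ∂γm with hI1
    have hlin : (1 - ε) * g₂ (s/T) ≤ (1 - ε) * g₂ s + ε := by linarith [hA2, hkey, hmul1, hmul2]
    have hdiv : (g₂ (s/T) - g₂ s) ≤ c := by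
      rw [hcdef]
      rw [le_div_iff₀ hε1]
      linarith
    linarith
  -- strict antitonicity of g₂
  have hg₂anti : StrictAntiOn g₂ (Ioi 0) := by
    apply strictAntiOn_of_deriv_neg (convex_Ioi 0)
    · exact fun x hx => (hg₂_deriv x hx).continuousAt.continuousWithinAt
    · intro x hx
      rw [interior_Ioi] at hx
      rw [(hg₂_deriv x hx).deriv]
      have h1 := hφ₂_pos x hx
      have h2 := hφ₂ x
      have hx0 : (0:ℝ) < x := hx
      nlinarith
  have hg₂anti' : AntitoneOn g₂ (Ioi 0) := hg₂anti.antitoneOn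
  -- M and its properties
  set M : ℝ := max (σbε / sℓ) (γbε / su) with hM
  have hsℓσ : sℓ < σbε := by
    by_contra hcon
    push_neg at hcon
    rcases eq_or_lt_of_le hcon with heq | hlt'
    · rw [← heq] at hsℓ; linarith
    · have := hg₂anti (mem_Ioi.2 hσ_pos) (mem_Ioi.2 hsℓ_pos) hlt'
      linarith
  have hsuγ : su < γbε := by
    by_contra hcon
    push_neg at hcon
    rcases eq_or_lt_of_le hcon with heq | hlt'
    · rw [← heq] at hsu; linarith
    · have := hg₂anti (mem_Ioi.2 hγ_pos) (mem_Ioi.2 hsu_pos) hlt'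
      linarith
  have hM1 : 1 < M := lt_max_of_lt_left ((one_lt_div hsℓ_pos).2 hsℓσ)
  have hM0 : 0 < M := lt_trans one_pos hM1
  -- endpoint bounds for ψ
  have hend_σ : c ≤ g₂ (σbε / M) - g₂ σbε := by
    have h1 : σbε / M ≤ sℓ := by
      rw [div_le_iff₀ hM0]
      calc σbε = sℓ * (σbε / sℓ) := by field_simp
        _ ≤ sℓ * M := by
            apply mul_le_mul_of_nonneg_left (le_max_left _ _) hsℓ_pos.le
    have := hg₂anti' (mem_Ioi.2 (div_pos hσ_pos hM0)) (mem_Ioi.2 hsℓ_pos) h1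
    linarith [hsℓ]
  have hend_γ : c ≤ g₂ (γbε / M) - g₂ γbε := by
    have h1 : γbε / M ≤ su := by
      rw [div_le_iff₀ hM0]
      calc γbε = su * (γbε / su) := by field_simp
        _ ≤ su * M := by
            apply mul_le_mul_of_nonneg_left (le_max_right _ _) hsu_pos.le
    have := hg₂anti' (mem_Ioi.2 (div_pos hγ_pos hM0)) (mem_Ioi.2 hsu_pos) h1
    linarith [hsu]
  have hψ := psi_min g₂ g₂' φ₂ hg₂_deriv hφ₂ σM hσM hφ₂_mono hφ₂_anti M hM1 γbε σbε hγ_pos hγσ s hs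
  have hψs : g₂ s + c ≤ g₂ (s / M) := by
    have := le_trans (le_min hend_γ hend_σ) hψ
    linarith
  -- T ≤ M
  have hTM : T ≤ M := by
    by_contra hcon
    push_neg at hcon
    have hlt2 : s / T < s / M := by
      apply div_lt_div_of_pos_left hspos hM0 hcon
    have := hg₂anti (mem_Ioi.2 hsT) (mem_Ioi.2 (div_pos hspos hM0)) hlt2
    linarith [hmain, hψs]
  -- conclude
  have hsum : ∑ i, θ i ^ 2 = T^2 - 1 := by
    rw [hT, Real.sq_sqrt (by positivity)]
    ring
  have hfinal : Real.sqrt (∑ i, θ i ^ 2) ≤ Real.sqrt (M^2 - 1) := by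
    apply Real.sqrt_le_sqrt
    rw [hsum]
    have : T^2 ≤ M^2 := by nlinarith
    linarith
  apply le_trans hfinal
  rcases max_cases (σbε / sℓ) (γbε / su) with ⟨heq, _⟩ | ⟨heq, _⟩
  · rw [hM, heq, ← hℓ]
    exact le_max_left _ _
  · rw [hM, heq, ← hu]
    exact le_max_right _ _
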